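/- Let nonzero scalars t_0, …, t_d in F be given. Then the following are equivalent: (i) for all 0 ≤ i, j ≤ d with |i − j| = 1, t_j/t_i + (q θ_i − q^{−1} θ_j)/(q^2 − q^{−2}) = 0; (ii) t_i/t_{i−1} = −a^{−1} q^{d−2i+1} for 1 ≤ i ≤ d; (iii) there exists a nonzero ε ∈ F such that t_i = ε (−1)^i a^{−i} q^{i(d−i)} for 0 ≤ i ≤ d. -/

import Mathlib

private lemma keyA {F : Type*} [Field F] (a q : F) (ha : a ≠ 0) (hq : q ≠ 0) (e m : ℤ) :
    q * (a * q^(2*m - e) + a⁻¹ * q^(e - 2*m))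
      - q⁻¹ * (a * q^(2*(m+1) - e) + a⁻¹ * q^(e - 2*(m+1)))
    = a⁻¹ * q^(e - 2*(m+1) + 1) * (q^2 - (q⁻¹)^2) := by
  have hX : q ^ (e - 2*m) ≠ 0 := zpow_ne_zero _ hq
  have c2 : q ^ ((2:ℤ)) = q^2 := by
    rw [show ((2:ℤ)) = ((2:ℕ):ℤ) by norm_num, zpow_natCast]
  have r1 : q ^ (2*m - e) = (q ^ (e - 2*m))⁻¹ := by
    rw [show 2*m - e = -(e-2*m) by ring, zpow_neg]
  have r2 : q ^ (2*(m+1) - e) = (q ^ (e - 2*m))⁻¹ * q^2 := by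
    rw [show 2*(m+1) - e = -(e-2*m) + 2 by ring, zpow_add₀ hq, zpow_neg, c2]
  have r3 : q ^ (e - 2*(m+1)) = q ^ (e - 2*m) * (q^2)⁻¹ := by
    rw [show e - 2*(m+1) = (e-2*m) + -(2:ℤ) by ring, zpow_add₀ hq, zpow_neg, c2]
  have r4 : q ^ (e - 2*(m+1) + 1) = q ^ (e - 2*m) * (q^2)⁻¹ * q := by
    rw [show e - 2*(m+1) + 1 = ((e-2*m) + -(2:ℤ)) + 1 by ring, zpow_add₀ hq,
      zpow_add₀ hq, zpow_neg, c2, zpow_one]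
  rw [r1, r2, r3, r4]
  field_simp
  ring

private lemma keyB {F : Type*} [Field F] (a q : F) (ha : a ≠ 0) (hq : q ≠ 0) (e m : ℤ) :
    q * (a * q^(2*(m+1) - e) + a⁻¹ * q^(e - 2*(m+1)))
      - q⁻¹ * (a * q^(2*m - e) + a⁻¹ * q^(e - 2*m))
    = a * q^(2*(m+1) - e - 1) * (q^2 - (q⁻¹)^2) := by
  have hX : q ^ (e - 2*m) ≠ 0 := zpow_ne_zero _ hq
  have c2 : q ^ ((2:ℤ)) = q^2 := by
    rw [show ((2:ℤ)) = ((2:ℕ):ℤ) by norm_num, zpow_natCast]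
  have r1 : q ^ (2*m - e) = (q ^ (e - 2*m))⁻¹ := by
    rw [show 2*m - e = -(e-2*m) by ring, zpow_neg]
  have r2 : q ^ (2*(m+1) - e) = (q ^ (e - 2*m))⁻¹ * q^2 := by
    rw [show 2*(m+1) - e = -(e-2*m) + 2 by ring, zpow_add₀ hq, zpow_neg, c2]
  have r3 : q ^ (e - 2*(m+1)) = q ^ (e - 2*m) * (q^2)⁻¹ := by
    rw [show e - 2*(m+1) = (e-2*m) + -(2:ℤ) by ring, zpow_add₀ hq, zpow_neg, c2]
  have r5 : q ^ (2*(m+1) - e - 1) = (q ^ (e - 2*m))⁻¹ * q^2 * q⁻¹ := by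
    rw [show 2*(m+1) - e - 1 = (-(e-2*m) + 2) + -(1:ℤ) by ring, zpow_add₀ hq,
      zpow_add₀ hq, zpow_neg, zpow_neg, c2, zpow_one]
  rw [r1, r2, r3, r5]
  field_simp
  ring

private lemma keyC {F : Type*} [Field F] (a q : F) (ha : a ≠ 0) (hq : q ≠ 0) (e m : ℤ) :
    q * (a * q^(2*(m-1) - e) + a⁻¹ * q^(e - 2*(m-1)))
      - q⁻¹ * (a * q^(2*m - e) + a⁻¹ * q^(e - 2*m))
    = a⁻¹ * q^(e - 2*m + 1) * (q^2 - (q⁻¹)^2) := by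
  have hX : q ^ (e - 2*m) ≠ 0 := zpow_ne_zero _ hq
  have c2 : q ^ ((2:ℤ)) = q^2 := by
    rw [show ((2:ℤ)) = ((2:ℕ):ℤ) by norm_num, zpow_natCast]
  have r1 : q ^ (2*m - e) = (q ^ (e - 2*m))⁻¹ := by
    rw [show 2*m - e = -(e-2*m) by ring, zpow_neg]
  have r6 : q ^ (2*(m-1) - e) = (q ^ (e - 2*m))⁻¹ * (q^2)⁻¹ := by
    rw [show 2*(m-1) - e = -(e-2*m) + -(2:ℤ) by ring, zpow_add₀ hq, zpow_neg, zpow_neg, c2]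
  have r7 : q ^ (e - 2*(m-1)) = q ^ (e - 2*m) * q^2 := by
    rw [show e - 2*(m-1) = (e-2*m) + 2 by ring, zpow_add₀ hq, c2]
  have r8 : q ^ (e - 2*m + 1) = q ^ (e - 2*m) * q := by
    rw [zpow_add₀ hq, zpow_one]
  rw [r1, r6, r7, r8]
  field_simp
  ring

theorem stmt_4 {F : Type*} [Field F] (a q : F) (ha : a ≠ 0) (hq : q ≠ 0)
    (hq4 : q ^ 4 ≠ 1) (d : ℕ)
    (θ : ℕ → F) (hθ : ∀ i, θ i = a * q ^ (2*(i:ℤ) - d) + a⁻¹ * q ^ ((d:ℤ) - 2*i))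
    (t : ℕ → F) (ht : ∀ i, i ≤ d → t i ≠ 0) :
    ((∀ i j, i ≤ d → j ≤ d → (i = j + 1 ∨ j = i + 1) →
        t j / t i + (q * θ i - q⁻¹ * θ j) / (q^2 - (q⁻¹)^2) = 0) ↔
     (∀ i, 1 ≤ i → i ≤ d → t i / t (i-1) = -(a⁻¹ * q ^ ((d:ℤ) - 2*i + 1)))) ∧
    ((∀ i, 1 ≤ i → i ≤ d → t i / t (i-1) = -(a⁻¹ * q ^ ((d:ℤ) - 2*i + 1))) ↔
     (∃ ε : F, ε ≠ 0 ∧ ∀ i, i ≤ d → t i = ε * (-1)^i * (a⁻¹)^i * q ^ (i*(d-i)))) := by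
  have hq4' : q ^ 4 - 1 ≠ 0 := sub_ne_zero.mpr hq4
  have hqq : q^2 - (q⁻¹)^2 ≠ 0 := by
    have h : q^2 - (q⁻¹)^2 = (q^4 - 1) / q^2 := by
      field_simp
    rw [h]
    exact div_ne_zero hq4' (pow_ne_zero 2 hq)
  constructor
  · -- (i) ↔ (ii)
    constructor
    · intro h i h1 hi
      have hmain := h (i-1) i (by omega) hi (Or.inr (by omega))
      rw [hθ (i-1), hθ i] at hmain
      have ci : ((i-1:ℕ):ℤ) = (i:ℤ) - 1 := by omega
      rw [ci, keyC a q ha hq (d:ℤ) (i:ℤ), mul_div_assoc, div_self hqq, mul_one] at hmain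
      exact eq_neg_of_add_eq_zero_left hmain
    · intro h i j hi hj hij
      rcases hij with hij | hij
      · -- i = j + 1
        subst hij
        have hrat := h (j+1) (by omega) hi
        simp only [Nat.add_sub_cancel] at hrat
        push_cast at hrat
        have hinv : t j / t (j+1) = (t (j+1) / t j)⁻¹ := by
          rw [inv_div]
        rw [hθ (j+1), hθ j]
        push_cast
        rw [keyB a q ha hq (d:ℤ) (j:ℤ), mul_div_assoc, div_self hqq, mul_one,
            hinv, hrat,
            show 2*((j:ℤ)+1) - (d:ℤ) - 1 = -((d:ℤ) - 2*((j:ℤ)+1) + 1) by ring,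
            zpow_neg, inv_neg, mul_inv, inv_inv]
        exact neg_add_cancel _
      · -- j = i + 1
        subst hij
        have hrat := h (i+1) (by omega) hj
        simp only [Nat.add_sub_cancel] at hrat
        push_cast at hrat
        rw [hθ i, hθ (i+1)]
        push_cast
        rw [keyA a q ha hq (d:ℤ) (i:ℤ), mul_div_assoc, div_self hqq, mul_one, hrat]
        exact neg_add_cancel _
  · -- (ii) ↔ (iii)
    constructor
    · intro h
      refine ⟨t 0, ht 0 (Nat.zero_le d), ?_⟩
      intro i
      induction i with
      | zero => simp
      | succ n ih =>
        intro hn1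
        have hn : n ≤ d := by omega
        have hrat := h (n+1) (by omega) hn1
        simp only [Nat.add_sub_cancel] at hrat
        have hne := ht n hn
        have hsplit : t (n+1) = (t (n+1) / t n) * t n := by
          field_simp
        rw [hsplit, hrat, ih hn]
        have c1 : ((d - n : ℕ):ℤ) = (d:ℤ) - n := by omega
        have c2 : ((d - (n+1) : ℕ):ℤ) = (d:ℤ) - (n+1) := by omega
        have hkey : q ^ ((d:ℤ) - 2*((n+1:ℕ):ℤ) + 1) * q ^ (((n*(d-n):ℕ)):ℤ)
            = q ^ ((((n+1)*(d-(n+1)):ℕ)):ℤ) := by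
          rw [← zpow_add₀ hq]
          congr 1
          push_cast [c1, c2]
          ring
        rw [← zpow_natCast q (n*(d-n)), ← zpow_natCast q ((n+1)*(d-(n+1))), ← hkey]
        ring
    · rintro ⟨ε, hε, hvals⟩ i h1 hi
      obtain ⟨k, rfl⟩ : ∃ k, i = k + 1 := ⟨i - 1, by omega⟩
      rw [hvals (k+1) hi, show (k+1) - 1 = k by omega, hvals k (by omega)]
      have c1 : ((d - k : ℕ):ℤ) = (d:ℤ) - k := by omega
      have c2 : ((d - (k+1) : ℕ):ℤ) = (d:ℤ) - (k+1) := by omega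
      have hkey : q ^ ((((k+1)*(d-(k+1)):ℕ)):ℤ)
          = q ^ (((k*(d-k):ℕ)):ℤ) * q ^ ((d:ℤ) - 2*((k+1:ℕ):ℤ) + 1) := by
        rw [← zpow_add₀ hq]
        congr 1
        push_cast [c1, c2]
        ring
      rw [← zpow_natCast q ((k+1)*(d-(k+1))), ← zpow_natCast q (k*(d-k)), hkey]
      have hz1 : q ^ (((k*(d-k):ℕ)):ℤ) ≠ 0 := zpow_ne_zero _ hq
      have hz2 : ((-1:F))^k ≠ 0 := pow_ne_zero _ (by norm_num)
      have hz3 : (a⁻¹)^k ≠ 0 := pow_ne_zero _ (inv_ne_zero ha)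
      rw [div_eq_iff (by exact mul_ne_zero (mul_ne_zero (mul_ne_zero hε hz2) hz3) hz1)]
      ring
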